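/- Let $n\ge 1$, $1<p\le q<\infty$, and $\alpha,\beta\in\mathbb{R}$ with $\alpha>n(p-1)$ and $q(\alpha+n)-p(\beta+n)=pqn$. Then there exists $C<\infty$ such that for all nonnegative measurable $u$ on $\mathbb{R}^n$, $\left(\int_{\mathbb{R}^n}\left(\int_{|y|\ge |x|} u(y)\,dy\right)^q |x|^{\beta}\,dx\right)^{1/q} \le C\left(\int_{\mathbb{R}^n} u(x)^p |x|^{\alpha}\,dx\right)^{1/p}$. -/

import Mathlib

open MeasureTheory Set ENNReal NNReal

private lemma ennreal_rpow_anti {x y : ℝ≥0∞} (hxy : x ≤ y) {z : ℝ} (hz : z ≤ 0) :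
    y ^ z ≤ x ^ z := by
  have h : x ^ (-z) ≤ y ^ (-z) := ENNReal.rpow_le_rpow hxy (by linarith)
  calc y ^ z = (y ^ (-z))⁻¹ := by rw [← ENNReal.rpow_neg, neg_neg]
    _ ≤ (x ^ (-z))⁻¹ := ENNReal.inv_le_inv.2 h
    _ = x ^ z := by rw [← ENNReal.rpow_neg, neg_neg]

private lemma tsum_rpow_le_aux {ι : Type*} (f : ι → ℝ≥0∞) {s : ℝ} (hs : 1 ≤ s) :
    ∑' i, f i ^ s ≤ (∑' i, f i) ^ s := by
  have h1 : ∀ i, f i ^ s ≤ (∑' j, f j) ^ (s - 1) * f i := fun i => by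
    calc f i ^ s = f i ^ (s - 1) * f i ^ (1 : ℝ) := by
          rw [← ENNReal.rpow_add_of_nonneg _ _ (by linarith) zero_le_one,
            show s - 1 + 1 = s by ring]
      _ ≤ (∑' j, f j) ^ (s - 1) * f i := by
          rw [ENNReal.rpow_one]
          exact mul_le_mul_left (ENNReal.rpow_le_rpow (ENNReal.le_tsum i) (by linarith)) _
  calc ∑' i, f i ^ s ≤ ∑' i, (∑' j, f j) ^ (s - 1) * f i := ENNReal.tsum_le_tsum h1
    _ = (∑' j, f j) ^ (s - 1) * (∑' j, f j) ^ (1 : ℝ) := by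
        rw [ENNReal.tsum_mul_left, ENNReal.rpow_one]
    _ = (∑' j, f j) ^ s := by
        rw [← ENNReal.rpow_add_of_nonneg _ _ (by linarith) zero_le_one,
          show s - 1 + 1 = s by ring]

private lemma tsum_holder_aux (f g : ℕ → ℝ≥0∞) {a b : ℝ} (hab : a.HolderConjugate b) :
    ∑' m, f m * g m ≤ (∑' m, f m ^ a) ^ (1 / a) * (∑' m, g m ^ b) ^ (1 / b) := by
  have H := ENNReal.lintegral_mul_le_Lp_mul_Lq (Measure.count : Measure ℕ) hab
    (f := f) (g := g) (measurable_from_top).aemeasurable (measurable_from_top).aemeasurable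
  simpa [lintegral_count] using H

private lemma tsum_jensen_aux (w d : ℕ → ℝ≥0∞) {s : ℝ} (hs : 1 ≤ s) :
    (∑' m, d m * w m) ^ s ≤ (∑' m, w m) ^ (s - 1) * ∑' m, d m ^ s * w m := by
  rcases eq_or_lt_of_le hs with h1 | h1
  · rw [← h1]; simp
  have hs0 : s ≠ 0 := by linarith
  have hcon : s.HolderConjugate (s / (s - 1)) := (Real.holderConjugate_iff_eq_conjExponent h1).2 rfl
  have hs1 : (0:ℝ) < s - 1 := by linarith
  have hsp : (0:ℝ) < s := by linarith
  have hs' : s / (s - 1) ≠ 0 := by positivity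
  have hkey : ∀ m, d m * w m = (d m * w m ^ (1 / s)) * w m ^ (1 / (s / (s - 1))) := by
    intro m
    rw [mul_assoc, ← ENNReal.rpow_add_of_nonneg _ _ (by positivity) (le_of_lt (by positivity)),
      show 1 / s + 1 / (s / (s - 1)) = 1 by
        rw [one_div_div]; field_simp; ring,
      ENNReal.rpow_one]
  calc (∑' m, d m * w m) ^ s
      = (∑' m, (d m * w m ^ (1 / s)) * w m ^ (1 / (s / (s - 1)))) ^ s := by
        rw [tsum_congr hkey]
    _ ≤ ((∑' m, (d m * w m ^ (1 / s)) ^ s) ^ (1 / s)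
          * (∑' m, (w m ^ (1 / (s / (s - 1)))) ^ (s / (s - 1))) ^ (1 / (s / (s - 1)))) ^ s :=
        ENNReal.rpow_le_rpow (tsum_holder_aux _ _ hcon) (by linarith)
    _ = (∑' m, w m) ^ (s - 1) * ∑' m, d m ^ s * w m := by
        have e1 : ∀ m, (d m * w m ^ (1 / s)) ^ s = d m ^ s * w m := fun m => by
          rw [ENNReal.mul_rpow_of_nonneg _ _ (by linarith), ← ENNReal.rpow_mul,
            one_div_mul_cancel hs0, ENNReal.rpow_one]
        have e2 : ∀ m, (w m ^ (1 / (s / (s - 1)))) ^ (s / (s - 1)) = w m := fun m => by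
          rw [← ENNReal.rpow_mul, one_div_mul_cancel hs', ENNReal.rpow_one]
        rw [tsum_congr e1, tsum_congr e2,
          ENNReal.mul_rpow_of_nonneg _ _ (by linarith : (0:ℝ) ≤ s),
          ← ENNReal.rpow_mul, ← ENNReal.rpow_mul, one_div_mul_cancel hs0, ENNReal.rpow_one,
          show 1 / (s / (s - 1)) * s = s - 1 by rw [one_div_div]; field_simp]
        ring

private lemma tsum_geom_aux {r : ℝ} (hr : 0 < r) :
    ∑' m : ℕ, (2 : ℝ≥0∞) ^ (-(r * (m : ℝ))) ≠ ⊤ := by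
  have h : ∀ m : ℕ, (2 : ℝ≥0∞) ^ (-(r * (m : ℝ))) = ((2 : ℝ≥0∞) ^ (-r)) ^ m := fun m => by
    rw [← ENNReal.rpow_natCast ((2 : ℝ≥0∞) ^ (-r)) m, ← ENNReal.rpow_mul,
      show -r * (m : ℝ) = -(r * (m : ℝ)) by ring]
  rw [tsum_congr h, ENNReal.tsum_geometric]
  have h1 : (2 : ℝ≥0∞) ^ (-r) < 1 :=
    ENNReal.rpow_lt_one_of_one_lt_of_neg one_lt_two (by linarith)
  rw [Ne, ENNReal.inv_eq_top]
  exact (tsub_pos_of_lt h1).ne'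

set_option maxHeartbeats 1000000 in
theorem conjugate_hardy_euclidean (n : ℕ) (hn : 1 ≤ n) (p q α β : ℝ) (hp : 1 < p) (hpq : p ≤ q)
    (hα : n * (p - 1) < α) (hrel : q * (α + n) - p * (β + n) = p * q * n) :
    ∃ C : ENNReal, C ≠ ⊤ ∧ ∀ u : EuclideanSpace ℝ (Fin n) → ENNReal, Measurable u →
      (∫⁻ x : EuclideanSpace ℝ (Fin n), (∫⁻ y in {y : EuclideanSpace ℝ (Fin n) | ‖x‖ ≤ ‖y‖}, u y) ^ q * ENNReal.ofReal (‖x‖ ^ β)) ^ (1/q)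
        ≤ C * (∫⁻ x, u x ^ p * ENNReal.ofReal (‖x‖ ^ α)) ^ (1/p) := by
  classical
  haveI hne : Nonempty (Fin n) := ⟨⟨0, hn⟩⟩
  haveI : Nontrivial (EuclideanSpace ℝ (Fin n)) := inferInstance
  -- basic real facts
  have hp0 : (0:ℝ) < p := by linarith
  have hq0 : (0:ℝ) < q := by linarith
  have hq1 : (1:ℝ) ≤ q := by linarith
  have hp1 : (0:ℝ) < p - 1 := by linarith
  have hn1 : (1:ℝ) ≤ (n:ℝ) := by exact_mod_cast hn
  have hnp : (0:ℝ) < (n:ℝ) := by linarith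
  have hα0 : (0:ℝ) < α := lt_of_le_of_lt (by positivity : (0:ℝ) ≤ (n:ℝ)*(p-1)) hα
  set p' : ℝ := p / (p - 1) with hp'_def
  have hp'0 : 0 < p' := by rw [hp'_def]; positivity
  have hpp' : p.HolderConjugate p' := by
    exact (Real.holderConjugate_iff_eq_conjExponent hp).2 hp'_def
  set t : ℝ := (α - n * (p - 1)) / p with ht_def
  have ht : 0 < t := by rw [ht_def]; apply div_pos _ hp0; linarith
  have hβn : β + (n:ℝ) = q * t := by
    rw [ht_def]
    field_simp
    nlinarith [hrel]
  set η : ℝ := α * (-(1/p) * p') with hη_def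
  have hη_neg : η < 0 := by
    have hpos : 0 < α * ((1/p) * p') := mul_pos hα0 (mul_pos (one_div_pos.2 hp0) hp'0)
    rw [hη_def]; nlinarith
  have hs1 : (1:ℝ) ≤ q / p := (one_le_div hp0).mpr hpq
  have hqp0 : (0:ℝ) ≤ q / p - 1 := by linarith
  -- dyadic scale
  set D : ℝ → ℝ≥0∞ := fun r => (2 : ℝ≥0∞) ^ r with hD_def
  have hD_add : ∀ r s : ℝ, D (r + s) = D r * D s := fun r s =>
    ENNReal.rpow_add r s two_ne_zero ENNReal.ofNat_ne_top
  have hD_pow : ∀ r s : ℝ, D r ^ s = D (r * s) := fun r s => (ENNReal.rpow_mul 2 r s).symm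
  have hD_ne_top : ∀ r, D r ≠ ⊤ := fun r => by
    simp [hD_def, Ne, ENNReal.rpow_eq_top_iff]
  have hD_ofReal : ∀ r : ℝ, ENNReal.ofReal ((2:ℝ) ^ r) = D r := fun r => by
    rw [hD_def, ← ENNReal.ofReal_rpow_of_pos two_pos, ENNReal.ofReal_ofNat]
  -- annuli
  set A : ℤ → Set (EuclideanSpace ℝ (Fin n)) :=
    fun k => {y | (2:ℝ) ^ (k:ℝ) ≤ ‖y‖ ∧ ‖y‖ < (2:ℝ) ^ ((k:ℝ) + 1)} with hA_def
  have hA_meas : ∀ k, MeasurableSet (A k) := fun k => by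
    simp only [hA_def, Set.setOf_and]
    exact (measurableSet_le measurable_const measurable_norm).inter
      (measurableSet_lt measurable_norm measurable_const)
  have hA_lt : ∀ k l : ℤ, k < l → Disjoint (A k) (A l) := by
    intro k l hkl
    rw [Set.disjoint_left]
    rintro y ⟨hy1, hy2⟩ ⟨hy3, hy4⟩
    have : (2:ℝ) ^ ((k:ℝ) + 1) ≤ (2:ℝ) ^ (l:ℝ) :=
      Real.rpow_le_rpow_of_exponent_le one_le_two
        (by exact_mod_cast Int.lt_iff_add_one_le.mp hkl)
    linarith
  have hA_disj : Pairwise (Function.onFun Disjoint A) := by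
    intro k l hkl
    rcases hkl.lt_or_gt with h | h
    · exact hA_lt k l h
    · exact (hA_lt l k h).symm
  have hmem : ∀ x : EuclideanSpace ℝ (Fin n), x ≠ 0 → x ∈ A ⌊Real.logb 2 ‖x‖⌋ := by
    intro x hx
    have hx0 : (0:ℝ) < ‖x‖ := norm_pos_iff.2 hx
    have hlog : (2:ℝ) ^ (Real.logb 2 ‖x‖) = ‖x‖ := Real.rpow_logb two_pos (by norm_num) hx0
    constructor
    · calc (2:ℝ) ^ ((⌊Real.logb 2 ‖x‖⌋ : ℝ)) ≤ (2:ℝ) ^ (Real.logb 2 ‖x‖) :=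
          Real.rpow_le_rpow_of_exponent_le one_le_two (Int.floor_le _)
        _ = ‖x‖ := hlog
    · calc ‖x‖ = (2:ℝ) ^ (Real.logb 2 ‖x‖) := hlog.symm
        _ < (2:ℝ) ^ ((⌊Real.logb 2 ‖x‖⌋ : ℝ) + 1) :=
          Real.rpow_lt_rpow_of_exponent_lt one_lt_two (Int.lt_floor_add_one _)
  have hA_union : ∀ k : ℤ, {y : EuclideanSpace ℝ (Fin n) | (2:ℝ) ^ (k:ℝ) ≤ ‖y‖}
      = ⋃ m : ℕ, A (k + (m:ℤ)) := by
    intro k; ext y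
    simp only [Set.mem_setOf_eq, Set.mem_iUnion]
    constructor
    · intro hy
      have hy0 : y ≠ 0 := by
        intro h
        rw [h, norm_zero] at hy
        exact absurd hy (not_le.2 (Real.rpow_pos_of_pos two_pos _))
      have hy0' : (0:ℝ) < ‖y‖ := norm_pos_iff.2 hy0
      have hmem' := hmem y hy0
      have hkj : k ≤ ⌊Real.logb 2 ‖y‖⌋ := by
        apply Int.le_floor.2
        exact (Real.le_logb_iff_rpow_le one_lt_two hy0').2 hy
      refine ⟨(⌊Real.logb 2 ‖y‖⌋ - k).toNat, ?_⟩
      rw [show k + ((⌊Real.logb 2 ‖y‖⌋ - k).toNat : ℤ) = ⌊Real.logb 2 ‖y‖⌋ by omega]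
      exact hmem'
    · rintro ⟨m, hm⟩
      have h1 : (2:ℝ) ^ (k:ℝ) ≤ (2:ℝ) ^ (((k + (m:ℤ)):ℤ):ℝ) :=
        Real.rpow_le_rpow_of_exponent_le one_le_two (by push_cast; linarith [Nat.cast_nonneg (α := ℝ) m])
      exact le_trans h1 hm.1
  -- volume facts
  set v : ℝ≥0∞ := volume (Metric.ball (0 : EuclideanSpace ℝ (Fin n)) 1) with hv_def
  have hv_top : v ≠ ⊤ := measure_ball_lt_top.ne
  have hvol : ∀ k : ℤ, volume (A k) ≤ D (((k:ℝ) + 1) * n) * v := by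
    intro k
    have hsub : A k ⊆ Metric.ball 0 ((2:ℝ) ^ ((k:ℝ)+1)) := by
      intro y hy
      rw [Metric.mem_ball, dist_zero_right]
      exact hy.2
    calc volume (A k) ≤ volume (Metric.ball (0:EuclideanSpace ℝ (Fin n)) ((2:ℝ) ^ ((k:ℝ)+1))) :=
          measure_mono hsub
      _ = ENNReal.ofReal (((2:ℝ) ^ ((k:ℝ)+1)) ^ Module.finrank ℝ (EuclideanSpace ℝ (Fin n))) * v :=
          Measure.addHaar_ball volume 0 (le_of_lt (Real.rpow_pos_of_pos two_pos _))
      _ = D (((k:ℝ) + 1) * n) * v := by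
          rw [finrank_euclideanSpace_fin, ← Real.rpow_natCast ((2:ℝ) ^ ((k:ℝ)+1)) n,
            ← Real.rpow_mul (by norm_num), hD_ofReal]
  have hw_bound : ∀ (k : ℤ) (c : ℝ) (y : EuclideanSpace ℝ (Fin n)), y ∈ A k →
      ENNReal.ofReal (‖y‖ ^ c) ≤ D ((k:ℝ) * c + |c|) := by
    intro k c y hy
    obtain ⟨h1, h2⟩ := hy
    have h2k : (0:ℝ) < (2:ℝ) ^ ((k:ℝ)) := Real.rpow_pos_of_pos two_pos _
    have key : ‖y‖ ^ c ≤ (2:ℝ) ^ ((k:ℝ) * c + |c|) := by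
      rcases le_or_gt 0 c with hc | hc
      · calc ‖y‖ ^ c ≤ ((2:ℝ) ^ ((k:ℝ)+1)) ^ c :=
            Real.rpow_le_rpow (norm_nonneg y) h2.le hc
          _ = (2:ℝ) ^ (((k:ℝ)+1) * c) := by rw [← Real.rpow_mul (by norm_num)]
          _ ≤ (2:ℝ) ^ ((k:ℝ) * c + |c|) := by
            apply Real.rpow_le_rpow_of_exponent_le one_le_two
            have := le_abs_self c
            nlinarith
      · calc ‖y‖ ^ c ≤ ((2:ℝ) ^ ((k:ℝ))) ^ c :=
            Real.rpow_le_rpow_of_nonpos h2k h1 hc.le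
          _ = (2:ℝ) ^ ((k:ℝ) * c) := by rw [← Real.rpow_mul (by norm_num)]
          _ ≤ (2:ℝ) ^ ((k:ℝ) * c + |c|) :=
            Real.rpow_le_rpow_of_exponent_le one_le_two (by linarith [abs_nonneg c])
    calc ENNReal.ofReal (‖y‖ ^ c) ≤ ENNReal.ofReal ((2:ℝ) ^ ((k:ℝ) * c + |c|)) :=
        ENNReal.ofReal_le_ofReal key
      _ = D ((k:ℝ) * c + |c|) := hD_ofReal _
  -- constants
  set K₁ : ℝ≥0∞ := D ((n:ℝ) * (p-1) / p) * v ^ (1/p') with hK₁_def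
  set K₂ : ℝ≥0∞ := D (|β| + (n:ℝ)) * v with hK₂_def
  set W' : ℝ≥0∞ := ∑' m : ℕ, D (-(t * p' / 2 * (m:ℝ))) with hW'_def
  set K₃ : ℝ≥0∞ := W' ^ (1/p') with hK₃_def
  set W : ℝ≥0∞ := ∑' m : ℕ, D (-(t * p / 2 * (m:ℝ))) with hW_def
  have hW'_top : W' ≠ ⊤ := by
    rw [hW'_def]
    simp only [hD_def]
    exact tsum_geom_aux (by positivity)
  have hW_top : W ≠ ⊤ := by
    rw [hW_def]
    simp only [hD_def]
    exact tsum_geom_aux (by positivity)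
  set C₀ : ℝ≥0∞ := K₁ ^ q * K₂ * (K₃ ^ q * (W ^ (q/p - 1) * W)) with hC₀_def
  have hK₁_top : K₁ ≠ ⊤ := ENNReal.mul_ne_top (hD_ne_top _)
    (ENNReal.rpow_ne_top_of_nonneg (le_of_lt (one_div_pos.2 hp'0)) hv_top)
  have hK₂_top : K₂ ≠ ⊤ := ENNReal.mul_ne_top (hD_ne_top _) hv_top
  have hK₃_top : K₃ ≠ ⊤ :=
    ENNReal.rpow_ne_top_of_nonneg (le_of_lt (one_div_pos.2 hp'0)) hW'_top
  have hC₀_top : C₀ ≠ ⊤ := by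
    rw [hC₀_def]
    exact ENNReal.mul_ne_top
      (ENNReal.mul_ne_top (ENNReal.rpow_ne_top_of_nonneg hq0.le hK₁_top) hK₂_top)
      (ENNReal.mul_ne_top (ENNReal.rpow_ne_top_of_nonneg hq0.le hK₃_top)
        (ENNReal.mul_ne_top (ENNReal.rpow_ne_top_of_nonneg hqp0 hW_top) hW_top))
  refine ⟨C₀ ^ (1/q), ENNReal.rpow_ne_top_of_nonneg (le_of_lt (one_div_pos.2 hq0)) hC₀_top,
    fun u hu => ?_⟩
  set w : EuclideanSpace ℝ (Fin n) → ℝ≥0∞ := fun y => ENNReal.ofReal (‖y‖ ^ α) with hw_def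
  have hwmeas : Measurable w := by rw [hw_def]; fun_prop
  set b : ℤ → ℝ≥0∞ := fun j => ∫⁻ y in A j, u y ^ p * w y with hb_def
  set c : ℤ → ℝ≥0∞ := fun j => b j ^ (1/p) with hc_def
  set R : ℝ≥0∞ := ∫⁻ x, u x ^ p * w x with hR_def
  have hbR : ∑' j : ℤ, b j ≤ R := by
    simp only [hb_def]
    calc ∑' j : ℤ, ∫⁻ y in A j, u y ^ p * w y
        = ∫⁻ y in ⋃ j : ℤ, A j, u y ^ p * w y := (lintegral_iUnion hA_meas hA_disj _).symm
      _ ≤ R := setLIntegral_le_lintegral _ _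
  -- Hölder on each annulus
  have h_aj : ∀ j : ℤ, (∫⁻ y in A j, u y) ≤ c j * (D (-(j:ℝ) * t) * K₁) := by
    intro j
    have hstep1 : (∫⁻ y in A j, u y)
        = ∫⁻ y in A j, ((fun y => u y * w y ^ (1/p)) * fun y => w y ^ (-(1/p))) y := by
      refine (setLIntegral_congr_fun (hA_meas j) (fun y hy => ?_)).symm
      have hy0 : (0:ℝ) < ‖y‖ := lt_of_lt_of_le (Real.rpow_pos_of_pos two_pos _) hy.1
      have hw0 : w y ≠ 0 := by
        simp only [hw_def, Ne, ENNReal.ofReal_eq_zero, not_le]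
        exact Real.rpow_pos_of_pos hy0 α
      have hwt : w y ≠ ⊤ := by simp [hw_def]
      simp only [Pi.mul_apply]
      rw [mul_assoc, ← ENNReal.rpow_add _ _ hw0 hwt, show 1/p + -(1/p) = 0 by ring,
        ENNReal.rpow_zero, mul_one]
    have hstep2 := ENNReal.lintegral_mul_le_Lp_mul_Lq (volume.restrict (A j)) hpp'
      (f := fun y => u y * w y ^ (1/p)) (g := fun y => w y ^ (-(1/p)))
      (by fun_prop) (by fun_prop)
    have hfp : (∫⁻ y in A j, (u y * w y ^ (1/p)) ^ p) = b j := by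
      simp only [hb_def]
      refine lintegral_congr fun y => ?_
      rw [ENNReal.mul_rpow_of_nonneg _ _ hp0.le, ← ENNReal.rpow_mul,
        one_div_mul_cancel hp0.ne', ENNReal.rpow_one]
    have hgp : (∫⁻ y in A j, (w y ^ (-(1/p))) ^ p')
        ≤ D ((j:ℝ) * η + ((j:ℝ)+1) * (n:ℝ)) * v := by
      have hbnd : ∀ y ∈ A j, (w y ^ (-(1/p))) ^ p' ≤ D ((j:ℝ) * η) := by
        intro y hy
        have hy0 : (0:ℝ) < ‖y‖ := lt_of_lt_of_le (Real.rpow_pos_of_pos two_pos _) hy.1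
        have e1 : (w y ^ (-(1/p))) ^ p' = ENNReal.ofReal ‖y‖ ^ η := by
          simp only [hw_def]
          rw [← ENNReal.ofReal_rpow_of_pos hy0, hη_def]
          conv_rhs => rw [ENNReal.rpow_mul, ENNReal.rpow_mul]
        rw [e1]
        have hle : D (j:ℝ) ≤ ENNReal.ofReal ‖y‖ := by
          rw [← hD_ofReal]
          exact ENNReal.ofReal_le_ofReal hy.1
        calc ENNReal.ofReal ‖y‖ ^ η ≤ (D (j:ℝ)) ^ η := ennreal_rpow_anti hle hη_neg.le
          _ = D ((j:ℝ) * η) := hD_pow _ _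
      calc ∫⁻ y in A j, (w y ^ (-(1/p))) ^ p'
          ≤ ∫⁻ _ in A j, D ((j:ℝ) * η) :=
            lintegral_mono_ae (ae_restrict_of_forall_mem (hA_meas j) hbnd)
        _ = D ((j:ℝ) * η) * volume (A j) := setLIntegral_const _ _
        _ ≤ D ((j:ℝ) * η) * (D (((j:ℝ)+1) * n) * v) := mul_le_mul_right (hvol j) _
        _ = D ((j:ℝ) * η + ((j:ℝ)+1) * (n:ℝ)) * v := by rw [hD_add, mul_assoc]
    have hexp : ((j:ℝ) * η + ((j:ℝ)+1) * (n:ℝ)) * (1/p') = -(j:ℝ) * t + (n:ℝ)*(p-1)/p := by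
      rw [hη_def, hp'_def, ht_def]
      field_simp
      ring
    calc (∫⁻ y in A j, u y)
        ≤ (b j) ^ (1/p) * (∫⁻ y in A j, (w y ^ (-(1/p))) ^ p') ^ (1/p') := by
          rw [hstep1, ← hfp]
          exact hstep2
      _ ≤ (b j) ^ (1/p) * ((D ((j:ℝ) * η + ((j:ℝ)+1) * (n:ℝ)) * v) ^ (1/p')) :=
          mul_le_mul_right (ENNReal.rpow_le_rpow hgp (le_of_lt (one_div_pos.2 hp'0))) _
      _ = c j * (D (-(j:ℝ) * t) * K₁) := by
          simp only [hc_def]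
          rw [ENNReal.mul_rpow_of_nonneg _ _ (le_of_lt (one_div_pos.2 hp'0)), hD_pow, hexp,
            hD_add, hK₁_def]
          ring
  set S : ℤ → ℝ≥0∞ := fun k => ∑' m : ℕ, c (k + (m:ℤ)) * D (-(t * (m:ℝ))) with hS_def
  have hg : ∀ k : ℤ, (∫⁻ y in {y : EuclideanSpace ℝ (Fin n) | (2:ℝ) ^ (k:ℝ) ≤ ‖y‖}, u y)
      ≤ D (-(k:ℝ) * t) * K₁ * S k := by
    intro k
    have hd : Pairwise (Function.onFun Disjoint fun m : ℕ => A (k + (m:ℤ))) := by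
      intro m m' hmm'
      exact hA_disj (fun h => hmm' (by omega))
    rw [hA_union k, lintegral_iUnion (fun m => hA_meas _) hd]
    calc ∑' m : ℕ, ∫⁻ y in A (k + (m:ℤ)), u y
        ≤ ∑' m : ℕ, c (k + (m:ℤ)) * (D (-(((k + (m:ℤ)):ℤ):ℝ) * t) * K₁) :=
          ENNReal.tsum_le_tsum fun m => h_aj _
      _ = ∑' m : ℕ, (D (-(k:ℝ) * t) * K₁) * (c (k + (m:ℤ)) * D (-(t * (m:ℝ)))) := by
          refine tsum_congr fun m => ?_
          rw [show -(((k + (m:ℤ)):ℤ):ℝ) * t = (-(k:ℝ)*t) + (-(t * (m:ℝ))) by push_cast; ring,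
            hD_add]
          ring
      _ = D (-(k:ℝ) * t) * K₁ * S k := by rw [ENNReal.tsum_mul_left, hS_def]
  -- pointwise bound and LHS decomposition
  have h0 : ∀ᵐ x : EuclideanSpace ℝ (Fin n), x ≠ 0 := by
    rw [MeasureTheory.ae_iff]
    simpa [not_not, Set.setOf_eq_eq_singleton] using
      measure_singleton (0 : EuclideanSpace ℝ (Fin n))
  set gg : ℤ → ℝ≥0∞ :=
    fun k => ∫⁻ y in {y : EuclideanSpace ℝ (Fin n) | (2:ℝ) ^ (k:ℝ) ≤ ‖y‖}, u y with hgg_def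
  have hpt : ∀ᵐ x : EuclideanSpace ℝ (Fin n),
      (∫⁻ y in {y : EuclideanSpace ℝ (Fin n) | ‖x‖ ≤ ‖y‖}, u y) ^ q * ENNReal.ofReal (‖x‖ ^ β)
        ≤ ∑' k : ℤ, (A k).indicator (fun x' => gg k ^ q * ENNReal.ofReal (‖x'‖ ^ β)) x := by
    filter_upwards [h0] with x hx
    have hxk := hmem x hx
    have hGle : (∫⁻ y in {y : EuclideanSpace ℝ (Fin n) | ‖x‖ ≤ ‖y‖}, u y)
        ≤ gg ⌊Real.logb 2 ‖x‖⌋ := by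
      rw [hgg_def]
      exact lintegral_mono_set (fun y hy => le_trans hxk.1 hy)
    calc (∫⁻ y in {y : EuclideanSpace ℝ (Fin n) | ‖x‖ ≤ ‖y‖}, u y) ^ q * ENNReal.ofReal (‖x‖ ^ β)
        ≤ gg ⌊Real.logb 2 ‖x‖⌋ ^ q * ENNReal.ofReal (‖x‖ ^ β) :=
          mul_le_mul_left (ENNReal.rpow_le_rpow hGle hq0.le) _
      _ = (A ⌊Real.logb 2 ‖x‖⌋).indicator
            (fun x' => gg ⌊Real.logb 2 ‖x‖⌋ ^ q * ENNReal.ofReal (‖x'‖ ^ β)) x :=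
          (Set.indicator_of_mem hxk
            (fun x' => gg ⌊Real.logb 2 ‖x‖⌋ ^ q * ENNReal.ofReal (‖x'‖ ^ β))).symm
      _ ≤ ∑' k : ℤ, (A k).indicator (fun x' => gg k ^ q * ENNReal.ofReal (‖x'‖ ^ β)) x :=
          ENNReal.le_tsum _
  have hI1 : (∫⁻ x : EuclideanSpace ℝ (Fin n),
        (∫⁻ y in {y : EuclideanSpace ℝ (Fin n) | ‖x‖ ≤ ‖y‖}, u y) ^ q * ENNReal.ofReal (‖x‖ ^ β))
      ≤ ∑' k : ℤ, gg k ^ q * (D ((k:ℝ) * (q*t)) * K₂) := by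
    calc (∫⁻ x : EuclideanSpace ℝ (Fin n),
          (∫⁻ y in {y : EuclideanSpace ℝ (Fin n) | ‖x‖ ≤ ‖y‖}, u y) ^ q * ENNReal.ofReal (‖x‖ ^ β))
        ≤ ∫⁻ x, ∑' k : ℤ, (A k).indicator (fun x' => gg k ^ q * ENNReal.ofReal (‖x'‖ ^ β)) x :=
          lintegral_mono_ae hpt
      _ = ∑' k : ℤ, ∫⁻ x, (A k).indicator (fun x' => gg k ^ q * ENNReal.ofReal (‖x'‖ ^ β)) x :=
          lintegral_tsum fun k =>
            ((Measurable.indicator (by fun_prop) (hA_meas k))).aemeasurable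
      _ = ∑' k : ℤ, ∫⁻ x in A k, gg k ^ q * ENNReal.ofReal (‖x‖ ^ β) := by
          refine tsum_congr fun k => ?_
          rw [lintegral_indicator (hA_meas k)]
      _ ≤ ∑' k : ℤ, gg k ^ q * (D ((k:ℝ) * (q*t)) * K₂) := by
          refine ENNReal.tsum_le_tsum fun k => ?_
          rw [lintegral_const_mul _ (by fun_prop)]
          refine mul_le_mul_right ?_ _
          calc ∫⁻ x in A k, ENNReal.ofReal (‖x‖ ^ β)
              ≤ ∫⁻ _ in A k, D ((k:ℝ)*β + |β|) :=
                lintegral_mono_ae (ae_restrict_of_forall_mem (hA_meas k)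
                  fun x hx => hw_bound k β x hx)
            _ = D ((k:ℝ)*β + |β|) * volume (A k) := setLIntegral_const _ _
            _ ≤ D ((k:ℝ)*β + |β|) * (D (((k:ℝ)+1)*n) * v) := mul_le_mul_right (hvol k) _
            _ = D ((k:ℝ)*β + |β| + ((k:ℝ)+1)*(n:ℝ)) * v := by
                rw [hD_add ((k:ℝ)*β + |β|) (((k:ℝ)+1)*(n:ℝ)), mul_assoc]
            _ = D ((k:ℝ) * (q*t)) * K₂ := by
                rw [show (k:ℝ)*β + |β| + ((k:ℝ)+1)*(n:ℝ) = (k:ℝ)*(q*t) + (|β| + (n:ℝ)) by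
                    linear_combination (k:ℝ) * hβn,
                  hD_add, hK₂_def, mul_assoc]
  have hI2 : (∫⁻ x : EuclideanSpace ℝ (Fin n),
        (∫⁻ y in {y : EuclideanSpace ℝ (Fin n) | ‖x‖ ≤ ‖y‖}, u y) ^ q * ENNReal.ofReal (‖x‖ ^ β))
      ≤ K₁ ^ q * K₂ * ∑' k : ℤ, S k ^ q := by
    refine hI1.trans ?_
    rw [← ENNReal.tsum_mul_left]
    refine ENNReal.tsum_le_tsum fun k => ?_
    have heq : (D (-(k:ℝ)*t) * K₁ * S k) ^ q * (D ((k:ℝ)*(q*t)) * K₂)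
        = K₁ ^ q * K₂ * S k ^ q := by
      rw [ENNReal.mul_rpow_of_nonneg _ _ hq0.le, ENNReal.mul_rpow_of_nonneg _ _ hq0.le, hD_pow]
      have h1 : D (-(k:ℝ)*t*q) * D ((k:ℝ)*(q*t)) = 1 := by
        rw [← hD_add, show -(k:ℝ)*t*q + (k:ℝ)*(q*t) = 0 by ring]
        simp [hD_def]
      calc D (-(k:ℝ)*t*q) * K₁ ^ q * S k ^ q * (D ((k:ℝ)*(q*t)) * K₂)
          = (D (-(k:ℝ)*t*q) * D ((k:ℝ)*(q*t))) * (K₁ ^ q * K₂ * S k ^ q) := by ring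
        _ = K₁ ^ q * K₂ * S k ^ q := by rw [h1, one_mul]
    calc gg k ^ q * (D ((k:ℝ) * (q*t)) * K₂)
        ≤ (D (-(k:ℝ)*t) * K₁ * S k) ^ q * (D ((k:ℝ)*(q*t)) * K₂) :=
          mul_le_mul_left (ENNReal.rpow_le_rpow (hg k) hq0.le) _
      _ = K₁ ^ q * K₂ * S k ^ q := heq
  -- discrete Hölder on S k
  set T : ℤ → ℝ≥0∞ := fun k => ∑' m : ℕ, c (k + (m:ℤ)) ^ p * D (-(t * p / 2 * (m:ℝ))) with hT_def
  have hS : ∀ k : ℤ, S k ≤ (T k) ^ (1/p) * K₃ := by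
    intro k
    have hsplit : ∀ m : ℕ, c (k + (m:ℤ)) * D (-(t * (m:ℝ)))
        = (c (k + (m:ℤ)) * D (-(t/2 * (m:ℝ)))) * D (-(t/2 * (m:ℝ))) := fun m => by
      rw [mul_assoc, ← hD_add, show -(t/2*(m:ℝ)) + -(t/2*(m:ℝ)) = -(t*(m:ℝ)) by ring]
    calc S k = ∑' m : ℕ, (c (k + (m:ℤ)) * D (-(t/2*(m:ℝ)))) * D (-(t/2*(m:ℝ))) := by
          rw [hS_def]; exact tsum_congr hsplit
      _ ≤ (∑' m : ℕ, (c (k + (m:ℤ)) * D (-(t/2*(m:ℝ)))) ^ p) ^ (1/p)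
            * (∑' m : ℕ, (D (-(t/2*(m:ℝ)))) ^ p') ^ (1/p') :=
          tsum_holder_aux _ _ hpp'
      _ = (T k) ^ (1/p) * K₃ := by
          congr 1
          · rw [hT_def]
            congr 1
            refine tsum_congr fun m => ?_
            rw [ENNReal.mul_rpow_of_nonneg _ _ hp0.le, hD_pow,
              show -(t/2*(m:ℝ))*p = -(t*p/2*(m:ℝ)) by ring]
          · rw [hK₃_def, hW'_def]
            congr 1
            refine tsum_congr fun m => ?_
            rw [hD_pow, show -(t/2*(m:ℝ))*p' = -(t*p'/2*(m:ℝ)) by ring]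
  -- Jensen
  have hT2 : ∀ k : ℤ, (T k) ^ (q/p)
      ≤ W ^ (q/p - 1) * ∑' m : ℕ, c (k + (m:ℤ)) ^ q * D (-(t * p / 2 * (m:ℝ))) := by
    intro k
    have hj := tsum_jensen_aux (fun m : ℕ => D (-(t * p / 2 * (m:ℝ))))
      (fun m : ℕ => c (k + (m:ℤ)) ^ p) hs1
    calc (T k) ^ (q/p)
        ≤ W ^ (q/p - 1) * ∑' m : ℕ, (c (k + (m:ℤ)) ^ p) ^ (q/p) * D (-(t * p / 2 * (m:ℝ))) := by
          rw [hT_def, hW_def]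
          exact hj
      _ = W ^ (q/p - 1) * ∑' m : ℕ, c (k + (m:ℤ)) ^ q * D (-(t * p / 2 * (m:ℝ))) := by
          congr 1
          refine tsum_congr fun m => ?_
          rw [← ENNReal.rpow_mul, show p * (q/p) = q by field_simp]
  -- sum over k
  have hshift : ∀ m : ℕ, ∑' k : ℤ, c (k + (m:ℤ)) ^ q = ∑' j : ℤ, c j ^ q := fun m =>
    Equiv.tsum_eq (Equiv.addRight (m:ℤ)) (fun j => c j ^ q)
  have hsum : ∑' k : ℤ, S k ^ q ≤ K₃ ^ q * (W ^ (q/p - 1) * (W * ∑' j : ℤ, c j ^ q)) := by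
    calc ∑' k : ℤ, S k ^ q
        ≤ ∑' k : ℤ, ((T k) ^ (1/p) * K₃) ^ q :=
          ENNReal.tsum_le_tsum fun k => ENNReal.rpow_le_rpow (hS k) hq0.le
      _ = ∑' k : ℤ, K₃ ^ q * (T k) ^ (q/p) := by
          refine tsum_congr fun k => ?_
          rw [ENNReal.mul_rpow_of_nonneg _ _ hq0.le, ← ENNReal.rpow_mul,
            show 1/p*q = q/p by ring]
          ring
      _ = K₃ ^ q * ∑' k : ℤ, (T k) ^ (q/p) := ENNReal.tsum_mul_left
      _ ≤ K₃ ^ q * ∑' k : ℤ,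
            (W ^ (q/p - 1) * ∑' m : ℕ, c (k + (m:ℤ)) ^ q * D (-(t * p / 2 * (m:ℝ)))) :=
          mul_le_mul_right (ENNReal.tsum_le_tsum hT2) _
      _ = K₃ ^ q * (W ^ (q/p - 1)
            * ∑' k : ℤ, ∑' m : ℕ, c (k + (m:ℤ)) ^ q * D (-(t * p / 2 * (m:ℝ)))) := by
          rw [ENNReal.tsum_mul_left]
      _ = K₃ ^ q * (W ^ (q/p - 1) * (W * ∑' j : ℤ, c j ^ q)) := by
          congr 1
          congr 1
          rw [ENNReal.tsum_comm]
          calc ∑' m : ℕ, ∑' k : ℤ, c (k + (m:ℤ)) ^ q * D (-(t * p / 2 * (m:ℝ)))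
              = ∑' m : ℕ, (∑' k : ℤ, c (k + (m:ℤ)) ^ q) * D (-(t * p / 2 * (m:ℝ))) := by
                refine tsum_congr fun m => ?_
                rw [ENNReal.tsum_mul_right]
            _ = ∑' m : ℕ, D (-(t * p / 2 * (m:ℝ))) * ∑' j : ℤ, c j ^ q := by
                refine tsum_congr fun m => ?_
                rw [hshift m, mul_comm]
            _ = W * ∑' j : ℤ, c j ^ q := by
                rw [ENNReal.tsum_mul_right, hW_def, ← ENNReal.tsum_mul_right]
  -- assemble
  have hc_sum : ∑' j : ℤ, c j ^ q ≤ R ^ (q/p) := by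
    have e : ∀ j : ℤ, c j ^ q = b j ^ (q/p) := fun j => by
      rw [hc_def, ← ENNReal.rpow_mul, show 1/p*q = q/p by ring]
    rw [tsum_congr e]
    exact (tsum_rpow_le_aux b hs1).trans (ENNReal.rpow_le_rpow hbR (by positivity))
  have hfinal : (∫⁻ x : EuclideanSpace ℝ (Fin n),
        (∫⁻ y in {y : EuclideanSpace ℝ (Fin n) | ‖x‖ ≤ ‖y‖}, u y) ^ q * ENNReal.ofReal (‖x‖ ^ β))
      ≤ C₀ * R ^ (q/p) := by
    refine hI2.trans ?_
    calc K₁ ^ q * K₂ * ∑' k : ℤ, S k ^ q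
        ≤ K₁ ^ q * K₂ * (K₃ ^ q * (W ^ (q/p - 1) * (W * ∑' j : ℤ, c j ^ q))) :=
          mul_le_mul_right hsum _
      _ ≤ K₁ ^ q * K₂ * (K₃ ^ q * (W ^ (q/p - 1) * (W * R ^ (q/p)))) :=
          mul_le_mul_right (mul_le_mul_right (mul_le_mul_right
            (mul_le_mul_right hc_sum _) _) _) _
      _ = C₀ * R ^ (q/p) := by rw [hC₀_def]; ring
  calc (∫⁻ x : EuclideanSpace ℝ (Fin n),
        (∫⁻ y in {y : EuclideanSpace ℝ (Fin n) | ‖x‖ ≤ ‖y‖}, u y) ^ q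
          * ENNReal.ofReal (‖x‖ ^ β)) ^ (1/q)
      ≤ (C₀ * R ^ (q/p)) ^ (1/q) :=
        ENNReal.rpow_le_rpow hfinal (le_of_lt (one_div_pos.2 hq0))
    _ = C₀ ^ (1/q) * R ^ (1/p) := by
        rw [ENNReal.mul_rpow_of_nonneg _ _ (le_of_lt (one_div_pos.2 hq0)),
          ← ENNReal.rpow_mul, show (q/p) * (1/q) = 1/p by field_simp]
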